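/- Every third-order tensor T of size N1 × N2 × N3 with entries in ℂ admits a t-SVD: there exist tensors U of size N1 × N1 × N3, Θ of size N1 × N2 × N3 and V of size N2 × N2 × N3 such that Uᴴ ∗ U = U ∗ Uᴴ = I (the N1 × N1 × N3 identity tensor), Vᴴ ∗ V = V ∗ Vᴴ = I (the N2 × N2 × N3 identity tensor), Θ is f-diagonal (Θ(i,j) is the zero tube whenever i ≠ j), and T = U ∗ Θ ∗ Vᴴ. Moreover Θ can be chosen so that for every frequency k : ZMod N3 and every diagonal index i, (dft Θ(i,i))(k) is a nonnegative real number and these values are nonincreasing in i. -/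

import Mathlib

open scoped BigOperators

/-- Circular convolution of two tubes of length `n`. -/
noncomputable def cconv {n : ℕ} [NeZero n] (a b : ZMod n → ℂ) : ZMod n → ℂ :=
  fun t => ∑ s : ZMod n, a s * b (t - s)

/-- Discrete Fourier transform of a tube of length `n`. -/
noncomputable def dft {n : ℕ} [NeZero n] (a : ZMod n → ℂ) : ZMod n → ℂ :=
  fun k => ∑ t : ZMod n,
    a t * Complex.exp (-2 * (Real.pi : ℂ) * Complex.I * ((k.val : ℂ) * (t.val : ℂ)) / (n : ℂ))

/-- t-product of third-order tensors. -/
noncomputable def tProduct {N1 N2 N3 N4 : ℕ} [NeZero N3]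
    (A : Fin N1 → Fin N2 → ZMod N3 → ℂ) (B : Fin N2 → Fin N4 → ZMod N3 → ℂ) :
    Fin N1 → Fin N4 → ZMod N3 → ℂ :=
  fun i j => ∑ l : Fin N2, cconv (A i l) (B l j)

/-- Conjugate transpose of a third-order tensor. -/
noncomputable def tConjTranspose {N1 N2 N3 : ℕ}
    (A : Fin N1 → Fin N2 → ZMod N3 → ℂ) : Fin N2 → Fin N1 → ZMod N3 → ℂ :=
  fun i j t => starRingEnd ℂ (A j i (-t))

/-- Identity tensor of size `N × N × N3`. -/
noncomputable def tId (N N3 : ℕ) : Fin N → Fin N → ZMod N3 → ℂ :=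
  fun i j t => if i = j ∧ t = 0 then 1 else 0

open Complex in
lemma dft_eq_zmod {n : ℕ} [NeZero n] (a : ZMod n → ℂ) : dft a = ZMod.dft a := by
  funext k
  rw [_root_.dft, ZMod.dft_apply]
  refine Finset.sum_congr rfl fun t _ => ?_
  rw [smul_eq_mul, mul_comm]
  congr 1
  have h1 : -(t * k) = (((-(t.val * k.val) : ℤ)) : ZMod n) := by
    push_cast
    rw [ZMod.natCast_val, ZMod.natCast_val, ZMod.cast_id, ZMod.cast_id]
  rw [h1, ZMod.stdAddChar_coe]
  congr 1
  push_cast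
  ring

lemma stdAddChar_conj {n : ℕ} [NeZero n] (x : ZMod n) :
    starRingEnd ℂ (ZMod.stdAddChar x) = ZMod.stdAddChar (-x) := by
  rw [ZMod.stdAddChar_apply, ZMod.stdAddChar_apply, AddChar.map_neg_eq_inv]
  exact (Circle.coe_inv_eq_conj _).symm

lemma zdft_cconv {n : ℕ} [NeZero n] (a b : ZMod n → ℂ) (k : ZMod n) :
    ZMod.dft (cconv a b) k = ZMod.dft a k * ZMod.dft b k := by
  rw [ZMod.dft_apply, ZMod.dft_apply, ZMod.dft_apply, Finset.sum_mul]
  have lhs : ∀ t : ZMod n, ZMod.stdAddChar (-(t * k)) • cconv a b t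
      = ∑ s : ZMod n, ZMod.stdAddChar (-(t * k)) * (a s * b (t - s)) := by
    intro t; rw [smul_eq_mul, cconv, Finset.mul_sum]
  simp only [lhs]
  rw [Finset.sum_comm]
  refine Finset.sum_congr rfl fun s _ => ?_
  rw [smul_eq_mul, Finset.mul_sum]
  refine Fintype.sum_equiv (Equiv.subRight s) _ _ fun t => ?_
  simp only [Equiv.subRight_apply, smul_eq_mul]
  have h1 : -(t * k) = -(s * k) + -((t - s) * k) := by ring
  rw [h1, AddChar.map_add_eq_mul]
  ring

lemma zdft_conjflip {n : ℕ} [NeZero n] (a : ZMod n → ℂ) (k : ZMod n) :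
    ZMod.dft (fun t => starRingEnd ℂ (a (-t))) k = starRingEnd ℂ (ZMod.dft a k) := by
  rw [ZMod.dft_apply, ZMod.dft_apply, map_sum]
  refine Fintype.sum_equiv (Equiv.neg _) _ _ fun t => ?_
  simp only [Equiv.neg_apply, smul_eq_mul, map_mul, neg_neg, stdAddChar_conj, neg_neg, neg_mul]

lemma zdft_delta {n : ℕ} [NeZero n] (k : ZMod n) :
    ZMod.dft (fun t : ZMod n => if t = 0 then (1:ℂ) else 0) k = 1 := by
  rw [ZMod.dft_apply]
  rw [Finset.sum_eq_single 0]
  · simp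
  · intro t _ ht; simp [ht]
  · simp

open Matrix in
open scoped ComplexOrder in
lemma svd_exists (N1 N2 : ℕ) (M : Matrix (Fin N1) (Fin N2) ℂ) :
    ∃ (U : Matrix (Fin N1) (Fin N1) ℂ) (V : Matrix (Fin N2) (Fin N2) ℂ)
      (σ : Fin N1 → Fin N2 → ℝ),
      Uᴴ * U = 1 ∧ U * Uᴴ = 1 ∧ Vᴴ * V = 1 ∧ V * Vᴴ = 1 ∧
      (∀ (i : Fin N1) (j : Fin N2), (i:ℕ) ≠ (j:ℕ) → σ i j = 0) ∧
      (∀ (i : Fin N1) (j : Fin N2), 0 ≤ σ i j) ∧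
      (∀ (i i' : Fin N1) (j j' : Fin N2), (i:ℕ) = (j:ℕ) → (i':ℕ) = (j':ℕ) → (i:ℕ) ≤ (i':ℕ) → σ i' j' ≤ σ i j) ∧
      M = U * (Matrix.of fun i j => ((σ i j : ℝ) : ℂ)) * Vᴴ := by
  classical
  set H : Matrix (Fin N2) (Fin N2) ℂ := Mᴴ * M with hHdef
  have hH : H.IsHermitian := isHermitian_conjTranspose_mul_self M
  have hPSD : H.PosSemidef := posSemidef_conjTranspose_mul_self M
  set e : Equiv.Perm (Fin N2) := Tuple.sort (fun j => -hH.eigenvalues j) with he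
  set μ : Fin N2 → ℝ := fun j => hH.eigenvalues (e j) with hμdef
  have hμ_nonneg : ∀ j, 0 ≤ μ j := fun j => hPSD.eigenvalues_nonneg _
  have hμ_anti : ∀ {j j' : Fin N2}, j ≤ j' → μ j' ≤ μ j := by
    intro j j' h
    have := Tuple.monotone_sort (fun j => -hH.eigenvalues j) h
    simpa [hμdef] using this
  set V0 : Matrix (Fin N2) (Fin N2) ℂ := (hH.eigenvectorUnitary : Matrix (Fin N2) (Fin N2) ℂ) with hV0
  have hV0a : V0ᴴ * V0 = 1 := by
    rw [← Matrix.star_eq_conjTranspose]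
    exact (Unitary.mem_iff.mp hH.eigenvectorUnitary.2).1
  have hV0b : V0 * V0ᴴ = 1 := by
    rw [← Matrix.star_eq_conjTranspose]
    exact (Unitary.mem_iff.mp hH.eigenvectorUnitary.2).2
  set V : Matrix (Fin N2) (Fin N2) ℂ := V0.submatrix id e with hVdef
  have hVa : Vᴴ * V = 1 := by
    rw [hVdef, conjTranspose_submatrix, ← Matrix.submatrix_mul _ _ _ id _ Function.bijective_id,
      hV0a, Matrix.submatrix_one_equiv]
  have hVb : V * Vᴴ = 1 := by
    rw [hVdef, conjTranspose_submatrix, ← Matrix.submatrix_mul _ _ _ _ _ e.bijective,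
      hV0b, Matrix.submatrix_id_id]
  have hdiag0 : star V0 * H * V0 = diagonal (RCLike.ofReal ∘ hH.eigenvalues) :=
    by have := hH.conjStarAlgAut_star_eigenvectorUnitary; rwa [Unitary.conjStarAlgAut_star_apply] at this
  have hdiag : Vᴴ * H * V = diagonal (fun j => (μ j : ℂ)) := by
    have h1 : Vᴴ * H * V = (star V0 * H * V0).submatrix e e := by
      rw [hVdef, conjTranspose_submatrix, Matrix.star_eq_conjTranspose]
      rw [← Matrix.submatrix_id_id H]
      rw [← Matrix.submatrix_mul _ _ _ id _ Function.bijective_id,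
        ← Matrix.submatrix_mul _ _ _ id _ Function.bijective_id]
      simp
    rw [h1, hdiag0]
    ext a b
    by_cases hab : a = b
    · subst hab; simp [Matrix.diagonal_apply, hμdef]
    · simp [Matrix.diagonal_apply, hab, Matrix.submatrix_apply, e.injective.ne hab]
  set W : Matrix (Fin N1) (Fin N2) ℂ := M * V with hWdef
  have hWW : Wᴴ * W = diagonal (fun j => (μ j : ℂ)) := by
    rw [hWdef, conjTranspose_mul, ← hdiag, hHdef]
    rw [Matrix.mul_assoc Vᴴ, ← Matrix.mul_assoc Mᴴ, ← Matrix.mul_assoc]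
  have hW' : ∀ a b, (∑ r, (starRingEnd ℂ) (W r a) * W r b)
      = if a = b then ((μ a : ℝ) : ℂ) else 0 := by
    intro a b
    have := congrFun (congrFun hWW a) b
    rw [Matrix.mul_apply] at this
    simp only [Matrix.conjTranspose_apply, Matrix.diagonal_apply, Complex.star_def] at this
    exact this
  set wcol : Fin N2 → EuclideanSpace ℂ (Fin N1) :=
    fun j => WithLp.toLp 2 (fun r => W r j / ((Real.sqrt (μ j) : ℝ) : ℂ)) with hwcol
  have key : ∀ a b : Fin N2, 0 < μ a → 0 < μ b →
      (inner ℂ (wcol a) (wcol b) : ℂ) = if a = b then 1 else 0 := by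
    intro a b ha hb
    rw [PiLp.inner_apply]
    simp only [hwcol, PiLp.toLp_apply, RCLike.inner_apply', map_div₀, Complex.conj_ofReal]
    have : ∀ r : Fin N1, (starRingEnd ℂ) (W r a) / ((Real.sqrt (μ a) : ℝ) : ℂ)
        * (W r b / ((Real.sqrt (μ b) : ℝ) : ℂ))
        = (starRingEnd ℂ) (W r a) * W r b
          / (((Real.sqrt (μ a) : ℝ) : ℂ) * ((Real.sqrt (μ b) : ℝ) : ℂ)) := by
      intro r; rw [div_mul_div_comm]
    simp only [this, ← Finset.sum_div, hW']
    by_cases hab : a = b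
    · subst hab
      rw [if_pos rfl, if_pos rfl, ← Complex.ofReal_mul, Real.mul_self_sqrt ha.le,
        div_self (by exact_mod_cast ha.ne')]
    · rw [if_neg hab, if_neg hab, zero_div]
  have zerocol : ∀ j : Fin N2, μ j = 0 → ∀ r, W r j = 0 := by
    intro j hj r
    have h0 := hW' j j
    rw [if_pos rfl, hj] at h0
    have h1 : ∀ r : Fin N1, (starRingEnd ℂ) (W r j) * W r j
        = ((Complex.normSq (W r j) : ℝ) : ℂ) := fun r => by
      rw [Complex.normSq_eq_conj_mul_self]
    rw [Finset.sum_congr rfl (fun r _ => h1 r), ← Complex.ofReal_sum] at h0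
    have h2 : ∑ r : Fin N1, Complex.normSq (W r j) = 0 := by exact_mod_cast h0
    have h3 := (Finset.sum_eq_zero_iff_of_nonneg
      (fun r _ => Complex.normSq_nonneg (W r j))).mp h2 r (Finset.mem_univ r)
    exact Complex.normSq_eq_zero.mp h3
  have hcard : Fintype.card {j : Fin N2 // 0 < μ j} ≤ N1 := by
    have ho : Orthonormal ℂ (fun j : {j : Fin N2 // 0 < μ j} => wcol j) := by
      rw [orthonormal_iff_ite]
      intro a b
      rw [key a b a.2 b.2]
      by_cases hab : a = b
      · simp [hab]
      · rw [if_neg (fun h => hab (Subtype.ext h)), if_neg hab]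
    have := ho.linearIndependent.fintype_card_le_finrank
    simpa [finrank_euclideanSpace] using this
  have μzero : ∀ j : Fin N2, N1 ≤ (j : ℕ) → μ j = 0 := by
    intro j hj
    by_contra hne
    have hpos : 0 < μ j := lt_of_le_of_ne (hμ_nonneg j) (Ne.symm hne)
    have hsub : Finset.Iic j ⊆ Finset.univ.filter (fun j' => 0 < μ j') := by
      intro j' hj'
      rw [Finset.mem_Iic] at hj'
      exact Finset.mem_filter.mpr ⟨Finset.mem_univ _, lt_of_lt_of_le hpos (hμ_anti hj')⟩
    have h1 : (j : ℕ) + 1 ≤ (Finset.univ.filter (fun j' => 0 < μ j')).card := by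
      have := Finset.card_le_card hsub
      rwa [Fin.card_Iic] at this
    have h2 : (Finset.univ.filter (fun j' => 0 < μ j')).card ≤ N1 := by
      simpa [Fintype.card_subtype] using hcard
    omega
  set s : Set (Fin N1) := {i | ∃ h : (i : ℕ) < N2, 0 < μ ⟨i, h⟩} with hs
  set v : Fin N1 → EuclideanSpace ℂ (Fin N1) :=
    fun i => if h : (i : ℕ) < N2 then wcol ⟨i, h⟩ else 0 with hv
  have hvon : Orthonormal ℂ (s.restrict v) := by
    rw [orthonormal_iff_ite]
    rintro ⟨a, hal, hap⟩ ⟨b, hbl, hbp⟩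
    simp only [Set.restrict, Set.domRestrict, hv, dif_pos hal, dif_pos hbl]
    rw [key _ _ hap hbp]
    by_cases hab : a = b
    · subst hab; simp
    · rw [if_neg (by simp [Fin.ext_iff, Fin.val_ne_of_ne hab]),
        if_neg (by simp [Subtype.ext_iff, Fin.ext_iff, Fin.val_ne_of_ne hab])]
  obtain ⟨bb, hbb⟩ := hvon.exists_orthonormalBasis_extension_of_card_eq
    (by simp [finrank_euclideanSpace])
  set U : Matrix (Fin N1) (Fin N1) ℂ := Matrix.of (fun r i => bb i r) with hU
  have hUa : Uᴴ * U = 1 := by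
    ext i j
    rw [Matrix.mul_apply, Matrix.one_apply]
    simp only [hU, Matrix.conjTranspose_apply, Matrix.of_apply, Complex.star_def]
    have := (orthonormal_iff_ite.mp bb.orthonormal) i j
    rw [PiLp.inner_apply] at this
    simpa [RCLike.inner_apply', mul_comm] using this
  have hUb : U * Uᴴ = 1 := mul_eq_one_comm.mp hUa
  refine ⟨U, V, fun i j => if (i : ℕ) = (j : ℕ) then Real.sqrt (μ j) else 0,
    hUa, hUb, hVa, hVb, ?_, ?_, ?_, ?_⟩
  · intro i j hij; simp only [if_neg hij]
  · intro i j
    dsimp only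
    by_cases hij : (i : ℕ) = (j : ℕ)
    · rw [if_pos hij]; exact Real.sqrt_nonneg _
    · rw [if_neg hij]
  · intro i i' j j' h1 h2 h3
    dsimp only
    rw [if_pos h1, if_pos h2]
    exact Real.sqrt_le_sqrt (hμ_anti (by rw [Fin.le_def]; omega))
  · have hUW : W = U * (Matrix.of fun (i : Fin N1) (j : Fin N2) => (((if (i : ℕ) = (j : ℕ)
        then Real.sqrt (μ j) else 0 : ℝ)) : ℂ)) := by
      ext r j
      rw [Matrix.mul_apply]
      by_cases hj : (j : ℕ) < N1
      · set i0 : Fin N1 := ⟨(j : ℕ), hj⟩ with hi0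
        rw [Finset.sum_eq_single i0]
        · simp only [hU, Matrix.of_apply, if_pos rfl, if_true]
          by_cases hpos : 0 < μ j
          · have hmem : i0 ∈ s := ⟨j.isLt, by
              convert hpos using 2⟩
            have : bb i0 = wcol j := by
              rw [hbb i0 hmem]
              simp only [hv]
              rw [dif_pos (show ((i0:ℕ) < N2) from j.isLt)]
            rw [this]
            simp only [hwcol]
            rw [if_pos rfl, div_mul_cancel₀]
            exact_mod_cast (Real.sqrt_ne_zero'.mpr hpos)
          · have hz : μ j = 0 := le_antisymm (not_lt.mp hpos) (hμ_nonneg j)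
            rw [zerocol j hz r, hz, Real.sqrt_zero]
            simp
        · intro i _ hi
          have : (i : ℕ) ≠ (j : ℕ) := by
            intro h; exact hi (Fin.ext h)
          simp [this]
        · simp
      · have hz : μ j = 0 := μzero j (not_lt.mp hj)
        rw [zerocol j hz r]
        refine (Finset.sum_eq_zero fun i _ => ?_).symm
        have : (i : ℕ) ≠ (j : ℕ) := by omega
        simp [this]
    calc M = M * (V * Vᴴ) := by rw [hVb, Matrix.mul_one]
    _ = W * Vᴴ := by rw [← Matrix.mul_assoc]
    _ = _ := by rw [hUW, Matrix.mul_assoc]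

lemma zdft_tProduct {N1 N2 N4 N3 : ℕ} [NeZero N3]
    (A : Fin N1 → Fin N2 → ZMod N3 → ℂ) (B : Fin N2 → Fin N4 → ZMod N3 → ℂ)
    (i : Fin N1) (j : Fin N4) (k : ZMod N3) :
    ZMod.dft (tProduct A B i j) k = ∑ l : Fin N2, ZMod.dft (A i l) k * ZMod.dft (B l j) k := by
  have h : tProduct A B i j = ∑ l : Fin N2, cconv (A i l) (B l j) := rfl
  rw [h, map_sum, Finset.sum_apply]
  exact Finset.sum_congr rfl fun l _ => zdft_cconv _ _ _

lemma zdft_tConjTranspose {N1 N2 N3 : ℕ} [NeZero N3]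
    (A : Fin N1 → Fin N2 → ZMod N3 → ℂ) (i : Fin N2) (j : Fin N1) (k : ZMod N3) :
    ZMod.dft (tConjTranspose A i j) k = starRingEnd ℂ (ZMod.dft (A j i) k) := by
  have h : tConjTranspose A i j = fun t => starRingEnd ℂ (A j i (-t)) := rfl
  rw [h]
  exact zdft_conjflip _ _

lemma zdft_tId {N N3 : ℕ} [NeZero N3] (i j : Fin N) (k : ZMod N3) :
    ZMod.dft (tId N N3 i j) k = if i = j then 1 else 0 := by
  by_cases h : i = j
  · subst h
    rw [if_pos rfl]
    have h2 : tId N N3 i i = fun t : ZMod N3 => if t = 0 then (1:ℂ) else 0 := by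
      funext t; simp [tId]
    rw [h2, zdft_delta]
  · rw [if_neg h]
    have h2 : tId N N3 i j = (0 : ZMod N3 → ℂ) := by
      funext t; simp [tId, h]
    rw [h2, map_zero]
    rfl

lemma tensor_ext {N1 N2 N3 : ℕ} [NeZero N3] {A B : Fin N1 → Fin N2 → ZMod N3 → ℂ}
    (h : ∀ i j k, ZMod.dft (A i j) k = ZMod.dft (B i j) k) : A = B :=
  funext fun i => funext fun j =>
    (ZMod.dft (N := N3) (E := ℂ)).injective (funext (h i j))

/-- existence of the t-SVD with nonnegative, nonincreasing singular
tubes in the Fourier domain. -/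
theorem stmt3 (N1 N2 N3 : ℕ) [NeZero N3]
    (T : Fin N1 → Fin N2 → ZMod N3 → ℂ) :
    ∃ (U : Fin N1 → Fin N1 → ZMod N3 → ℂ)
      (Θ : Fin N1 → Fin N2 → ZMod N3 → ℂ)
      (V : Fin N2 → Fin N2 → ZMod N3 → ℂ),
      tProduct (tConjTranspose U) U = tId N1 N3 ∧
      tProduct U (tConjTranspose U) = tId N1 N3 ∧
      tProduct (tConjTranspose V) V = tId N2 N3 ∧
      tProduct V (tConjTranspose V) = tId N2 N3 ∧
      (∀ (i : Fin N1) (j : Fin N2), (i : ℕ) ≠ (j : ℕ) → Θ i j = 0) ∧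
      T = tProduct U (tProduct Θ (tConjTranspose V)) ∧
      (∀ (k : ZMod N3) (i : Fin N1) (j : Fin N2), (i : ℕ) = (j : ℕ) →
        (dft (Θ i j) k).im = 0 ∧ 0 ≤ (dft (Θ i j) k).re) ∧
      (∀ (k : ZMod N3) (i i' : Fin N1) (j j' : Fin N2),
        (i : ℕ) = (j : ℕ) → (i' : ℕ) = (j' : ℕ) → (i : ℕ) ≤ (i' : ℕ) →
        (dft (Θ i' j') k).re ≤ (dft (Θ i j) k).re) := by
  classical
  choose Uh Vh σh hU1 hU2 hV1 hV2 hdg hnn hmono hfac using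
    fun k : ZMod N3 => svd_exists N1 N2 (Matrix.of fun i j => ZMod.dft (T i j) k)
  set U : Fin N1 → Fin N1 → ZMod N3 → ℂ :=
    fun i j => (ZMod.dft (N := N3) (E := ℂ)).symm (fun k => Uh k i j) with hUdef
  set Θ : Fin N1 → Fin N2 → ZMod N3 → ℂ :=
    fun i j => (ZMod.dft (N := N3) (E := ℂ)).symm (fun k => ((σh k i j : ℝ) : ℂ)) with hTdef
  set V : Fin N2 → Fin N2 → ZMod N3 → ℂ :=
    fun i j => (ZMod.dft (N := N3) (E := ℂ)).symm (fun k => Vh k i j) with hVdef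
  have hUhat : ∀ i j k, ZMod.dft (U i j) k = Uh k i j := by
    intro i j k
    rw [hUdef]
    rw [LinearEquiv.apply_symm_apply]
  have hVhat : ∀ i j k, ZMod.dft (V i j) k = Vh k i j := by
    intro i j k
    rw [hVdef]
    rw [LinearEquiv.apply_symm_apply]
  have hThat : ∀ i j k, ZMod.dft (Θ i j) k = ((σh k i j : ℝ) : ℂ) := by
    intro i j k
    rw [hTdef]
    rw [LinearEquiv.apply_symm_apply]
  refine ⟨U, Θ, V, ?_, ?_, ?_, ?_, ?_, ?_, ?_, ?_⟩
  · refine tensor_ext fun i j k => ?_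
    rw [zdft_tProduct, zdft_tId]
    have h1 : ∀ l, ZMod.dft (tConjTranspose U i l) k * ZMod.dft (U l j) k
        = Matrix.conjTranspose (Uh k) i l * Uh k l j := by
      intro l
      rw [zdft_tConjTranspose, hUhat, hUhat, Matrix.conjTranspose_apply]
      rfl
    rw [Finset.sum_congr rfl fun l _ => h1 l, ← Matrix.mul_apply, hU1 k, Matrix.one_apply]
  · refine tensor_ext fun i j k => ?_
    rw [zdft_tProduct, zdft_tId]
    have h1 : ∀ l, ZMod.dft (U i l) k * ZMod.dft (tConjTranspose U l j) k
        = Uh k i l * Matrix.conjTranspose (Uh k) l j := by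
      intro l
      rw [zdft_tConjTranspose, hUhat, hUhat, Matrix.conjTranspose_apply]
      rfl
    rw [Finset.sum_congr rfl fun l _ => h1 l, ← Matrix.mul_apply, hU2 k, Matrix.one_apply]
  · refine tensor_ext fun i j k => ?_
    rw [zdft_tProduct, zdft_tId]
    have h1 : ∀ l, ZMod.dft (tConjTranspose V i l) k * ZMod.dft (V l j) k
        = Matrix.conjTranspose (Vh k) i l * Vh k l j := by
      intro l
      rw [zdft_tConjTranspose, hVhat, hVhat, Matrix.conjTranspose_apply]
      rfl
    rw [Finset.sum_congr rfl fun l _ => h1 l, ← Matrix.mul_apply, hV1 k, Matrix.one_apply]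
  · refine tensor_ext fun i j k => ?_
    rw [zdft_tProduct, zdft_tId]
    have h1 : ∀ l, ZMod.dft (V i l) k * ZMod.dft (tConjTranspose V l j) k
        = Vh k i l * Matrix.conjTranspose (Vh k) l j := by
      intro l
      rw [zdft_tConjTranspose, hVhat, hVhat, Matrix.conjTranspose_apply]
      rfl
    rw [Finset.sum_congr rfl fun l _ => h1 l, ← Matrix.mul_apply, hV2 k, Matrix.one_apply]
  · intro i j hij
    have h0 : (fun k : ZMod N3 => ((σh k i j : ℝ) : ℂ)) = 0 := by
      funext k
      rw [hdg k i j hij]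
      simp
    show (ZMod.dft (N := N3) (E := ℂ)).symm (fun k => ((σh k i j : ℝ) : ℂ)) = 0
    rw [h0, map_zero]
  · refine tensor_ext fun i j k => ?_
    have hrhs : ZMod.dft (tProduct U (tProduct Θ (tConjTranspose V)) i j) k
        = (Uh k * ((Matrix.of fun a b => ((σh k a b : ℝ) : ℂ)) * Matrix.conjTranspose (Vh k))) i j := by
      rw [zdft_tProduct, Matrix.mul_apply]
      refine Finset.sum_congr rfl fun l _ => ?_
      rw [hUhat, zdft_tProduct, Matrix.mul_apply, Finset.mul_sum, Finset.mul_sum]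
      refine Finset.sum_congr rfl fun m _ => ?_
      rw [zdft_tConjTranspose, hThat, hVhat, Matrix.conjTranspose_apply]
      rfl
    rw [hrhs, ← Matrix.mul_assoc, ← hfac k]
    rfl
  · intro k i j hij
    rw [dft_eq_zmod, hThat]
    exact ⟨Complex.ofReal_im _, by rw [Complex.ofReal_re]; exact hnn k i j⟩
  · intro k i i' j j' h1 h2 h3
    rw [dft_eq_zmod, dft_eq_zmod, hThat, hThat, Complex.ofReal_re, Complex.ofReal_re]
    exact hmono k i i' j j' h1 h2 h3
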